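/- For each integer n ≥ 1, the function V ↦ log G_n(V), where G_n(V) = (1/√(n+1)) · ((n² + n + V) / ((n+1)(n + V)))^{−n/2}, is strictly concave on [0, ∞). In particular, its second derivative equals −n³(2V + n² + 2n) / (2(V+n)²(V + n² + n)²) < 0 for all V ≥ 0. -/

import Mathlib

open Real Set Filter

/-- The Gaussian mixture test martingale value (mixing parameter s = 1),
as a function of the self-normalized deviation V. -/
noncomputable def Gmart (n : ℕ) (V : ℝ) : ℝ :=
  (1 / Real.sqrt ((n : ℝ) + 1)) *
    (((n : ℝ) ^ 2 + (n : ℝ) + V) / (((n : ℝ) + 1) * ((n : ℝ) + V))) ^ (-(n : ℝ) / 2)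

/-- for each n ≥ 1, V ↦ log G_n(V) is strictly concave on [0,∞),
with second derivative −n³(2V + n² + 2n) / (2(V+n)²(V+n²+n)²) < 0 for all V ≥ 0. -/
theorem stmt2 (n : ℕ) (hn : 1 ≤ n) :
    StrictConcaveOn ℝ (Set.Ici (0 : ℝ)) (fun V : ℝ => Real.log (Gmart n V)) ∧
    ∀ V : ℝ, 0 ≤ V →
      deriv (deriv (fun V : ℝ => Real.log (Gmart n V))) V
          = -((n : ℝ) ^ 3 * (2 * V + (n : ℝ) ^ 2 + 2 * (n : ℝ))) /
              (2 * (V + (n : ℝ)) ^ 2 * (V + (n : ℝ) ^ 2 + (n : ℝ)) ^ 2) ∧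
      -((n : ℝ) ^ 3 * (2 * V + (n : ℝ) ^ 2 + 2 * (n : ℝ))) /
          (2 * (V + (n : ℝ)) ^ 2 * (V + (n : ℝ) ^ 2 + (n : ℝ)) ^ 2) < 0 := by
  have hN1 : (1:ℝ) ≤ (n:ℝ) := by exact_mod_cast hn
  set N : ℝ := (n : ℝ) with hNdef
  have hN0 : 0 < N := by linarith
  set f : ℝ → ℝ := fun V : ℝ => Real.log (Gmart n V) with hf
  set g : ℝ → ℝ := fun V : ℝ =>
    (N - 1) / 2 * Real.log (N + 1) + N / 2 * (Real.log (V + N) - Real.log (V + N ^ 2 + N))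
    with hgdef
  -- f = g on Ioi (-N)
  have key : EqOn f g (Ioi (-N)) := by
    intro V hV
    have hA : 0 < V + N := by simp only [mem_Ioi] at hV; linarith
    have hB : 0 < V + N ^ 2 + N := by nlinarith
    have hn1 : (0:ℝ) < N + 1 := by linarith
    have hbase : 0 < (N ^ 2 + N + V) / ((N + 1) * (N + V)) :=
      div_pos (by nlinarith) (mul_pos hn1 (by linarith))
    have hsq : 0 < Real.sqrt (N + 1) := Real.sqrt_pos.mpr hn1
    simp only [hf, hgdef, Gmart, ← hNdef]
    rw [Real.log_mul (by positivity) (ne_of_gt (Real.rpow_pos_of_pos hbase _)),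
      Real.log_rpow hbase, one_div, Real.log_inv, Real.log_sqrt (le_of_lt hn1),
      Real.log_div (ne_of_gt (by nlinarith)) (ne_of_gt (mul_pos hn1 (by linarith))),
      Real.log_mul (ne_of_gt hn1) (ne_of_gt (by linarith)),
      show N ^ 2 + N + V = V + N ^ 2 + N by ring, show N + V = V + N by ring]
    ring
  have hopen : IsOpen (Ioi (-N)) := isOpen_Ioi
  set g1 : ℝ → ℝ := fun V : ℝ => N / 2 * ((V + N)⁻¹ - (V + N ^ 2 + N)⁻¹) with hg1def
  -- first derivative
  have hderiv1 : ∀ V ∈ Ioi (-N), deriv f V = g1 V := by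
    intro V hV
    have hA : 0 < V + N := by simp only [mem_Ioi] at hV; linarith
    have hB : 0 < V + N ^ 2 + N := by nlinarith
    have hgd : HasDerivAt g (g1 V) V := by
      have h1 : HasDerivAt (fun V : ℝ => V + N) 1 V := (hasDerivAt_id V).add_const N
      have h2 : HasDerivAt (fun V : ℝ => V + N ^ 2 + N) 1 V := by
        simpa using ((hasDerivAt_id V).add_const (N ^ 2)).add_const N
      have hl1 := h1.log hA.ne'
      have hl2 := h2.log hB.ne'
      have := ((hl1.sub hl2).const_mul (N / 2)).const_add ((N - 1) / 2 * Real.log (N + 1))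
      refine HasDerivAt.congr_deriv (f := g) this ?_
      simp [hg1def, one_div]
    have heq : f =ᶠ[nhds V] g := eventuallyEq_of_mem (hopen.mem_nhds hV) key
    rw [heq.deriv_eq, hgd.deriv]
  -- second derivative
  have hderiv2 : ∀ V ∈ Ioi (-N), deriv (deriv f) V
      = -(N ^ 3 * (2 * V + N ^ 2 + 2 * N)) /
          (2 * (V + N) ^ 2 * (V + N ^ 2 + N) ^ 2) := by
    intro V hV
    have hA : 0 < V + N := by simp only [mem_Ioi] at hV; linarith
    have hB : 0 < V + N ^ 2 + N := by nlinarith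
    have h1 : HasDerivAt (fun V : ℝ => V + N) 1 V := (hasDerivAt_id V).add_const N
    have h2 : HasDerivAt (fun V : ℝ => V + N ^ 2 + N) 1 V := by
      simpa using ((hasDerivAt_id V).add_const (N ^ 2)).add_const N
    have hg1d : HasDerivAt g1 (N / 2 * (-1 / (V + N) ^ 2 - -1 / (V + N ^ 2 + N) ^ 2)) V :=
      ((h1.inv hA.ne').sub (h2.inv hB.ne')).const_mul (N / 2)
    have heq : deriv f =ᶠ[nhds V] g1 := eventuallyEq_of_mem (hopen.mem_nhds hV) hderiv1
    rw [heq.deriv_eq, hg1d.deriv]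
    field_simp
    ring
  constructor
  · apply strictConcaveOn_of_deriv2_neg (convex_Ici 0)
    · -- continuity
      have hgc : ContinuousOn g (Ici (0:ℝ)) := by
        apply ContinuousOn.add continuousOn_const
        apply ContinuousOn.mul continuousOn_const
        apply ContinuousOn.sub
        · exact ContinuousOn.log (by fun_prop) fun x hx => by
            have : (0:ℝ) ≤ x := hx; positivity
        · exact ContinuousOn.log (by fun_prop) fun x hx => by
            have : (0:ℝ) ≤ x := hx; positivity
      exact hgc.congr fun x hx => key (by simp only [mem_Ioi]; have : (0:ℝ) ≤ x := hx; linarith)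
    · intro x hx
      rw [interior_Ici, mem_Ioi] at hx
      have hx' : x ∈ Ioi (-N) := by simp only [mem_Ioi]; linarith
      simp only [Function.iterate_succ, Function.iterate_zero, Function.comp_apply, id_eq]
      rw [hderiv2 x hx']
      apply div_neg_of_neg_of_pos
      · have h1 : 0 < N ^ 3 * (2 * x + N ^ 2 + 2 * N) :=
          mul_pos (pow_pos hN0 3) (by nlinarith)
        linarith
      · have hA : 0 < x + N := by linarith
        have hB : 0 < x + N ^ 2 + N := by nlinarith
        positivity
  · intro V hV
    have hV' : V ∈ Ioi (-N) := by simp only [mem_Ioi]; linarith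
    refine ⟨hderiv2 V hV', ?_⟩
    apply div_neg_of_neg_of_pos
    · have h1 : 0 < N ^ 3 * (2 * V + N ^ 2 + 2 * N) :=
        mul_pos (pow_pos hN0 3) (by nlinarith)
      linarith
    · have hA : 0 < V + N := by linarith
      have hB : 0 < V + N ^ 2 + N := by nlinarith
      positivity
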